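/- Let Γ be a finite simple graph on vertex set V = {1,...,n} with edge ideal I in R = k[x_1,...,x_n], and let a ∈ ℕ^n. Then the monomial x^a = x_1^{a_1}···x_n^{a_n} belongs to I^t if and only if the matching number ν(Γ_a) of the vertex-weighted graph Γ_a is at least t, where a matching of Γ_a is a family of (not necessarily distinct) edges of Γ such that each vertex i appears in at most a_i of these edges. -/

import Mathlib

open MvPolynomial

section Defs

variable {V : Type*}

/-- A matching of the vertex-weighted graph `Γ_a`: a multiset of (oriented) edges of `G`
in which every vertex `i` appears at most `a i` times. -/
def IsWMatching [DecidableEq V] (G : SimpleGraph V) (a : V → ℕ)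
    (M : Multiset (V × V)) : Prop :=
  (∀ e ∈ M, G.Adj e.1 e.2) ∧
    ∀ i : V, (M.map Prod.fst).count i + (M.map Prod.snd).count i ≤ a i

/-- The matching number `ν(Γ_a)` of the vertex-weighted graph `Γ_a`. -/
noncomputable def wNu [DecidableEq V] (G : SimpleGraph V) (a : V → ℕ) : ℕ :=
  sSup {k : ℕ | ∃ M : Multiset (V × V), IsWMatching G a M ∧ Multiset.card M = k}

/-- A perfect matching of `Γ_a`: every vertex `i` appears exactly `a i` times. -/
def IsWPerfectMatching [DecidableEq V] (G : SimpleGraph V) (a : V → ℕ)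
    (M : Multiset (V × V)) : Prop :=
  (∀ e ∈ M, G.Adj e.1 e.2) ∧
    ∀ i : V, (M.map Prod.fst).count i + (M.map Prod.snd).count i = a i

/-- `Γ_a` is matching-critical: lowering the weight of any supported vertex
does not decrease the matching number. -/
def MatchingCritical [DecidableEq V] (G : SimpleGraph V) (a : V → ℕ) : Prop :=
  ∀ i : V, a i ≠ 0 → wNu G (a - Pi.single i 1) = wNu G a

/-- The polarization `p(Γ_a)`: each vertex `i` is replaced by `a i` copies. -/
def polarization (G : SimpleGraph V) (a : V → ℕ) :
    SimpleGraph (Σ i : V, Fin (a i)) where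
  Adj u v := G.Adj u.1 v.1
  symm := ⟨fun _ _ h => G.symm.symm _ _ h⟩
  loopless := ⟨fun u h => G.irrefl h⟩

/-- The base graph of `Γ_a` as a spanning subgraph of `G`: edges of `G` between
supported vertices (vertices of weight `0` become isolated). -/
def baseGraph (G : SimpleGraph V) (a : V → ℕ) : SimpleGraph V where
  Adj i j := G.Adj i j ∧ a i ≠ 0 ∧ a j ≠ 0
  symm := ⟨fun _ _ h => ⟨h.1.symm, h.2.2, h.2.1⟩⟩
  loopless := ⟨fun _ h => G.irrefl h.1⟩

/-- An ear: a walk with endpoints `u`, `v` and list of inner vertices `inner`. -/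
structure PreEar (V : Type*) where
  u : V
  inner : List V
  v : V

namespace PreEar

/-- The length of an ear. -/
def len (E : PreEar V) : ℕ := E.inner.length + 1

/-- The vertex list of an ear. -/
def verts (E : PreEar V) : List V := E.u :: (E.inner ++ [E.v])

/-- The ear is a walk in `G`. -/
def IsWalk (G : SimpleGraph V) (E : PreEar V) : Prop := List.Chain' G.Adj E.verts

end PreEar

/-- Endpoints of each subsequent ear belong to earlier ears
(`S` accumulates the vertices seen so far). -/
def earsOk (G : SimpleGraph V) : List (PreEar V) → List V → Prop
  | [], _ => True
  | E :: rest, S => E.u ∈ S ∧ E.v ∈ S ∧ earsOk G rest (S ++ E.verts)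

/-- The number of appearances of `i` in an ear decomposition, not as an endpoint of
the subsequent ears. -/
def earCount [DecidableEq V] (i : V) : List (PreEar V) → ℕ
  | [] => 0
  | E0 :: rest => (E0.u :: E0.inner).count i + (rest.map fun E => E.inner.count i).sum

/-- The number of even ears of an ear decomposition. -/
def evenEars (D : List (PreEar V)) : ℕ :=
  D.countP fun E => E.inner.length % 2 == 1

/-- An ear decomposition starting with an odd closed walk. -/
def IsInitOddDecomp (G : SimpleGraph V) (D : List (PreEar V)) : Prop :=
  ∃ E0 rest, D = E0 :: rest ∧ E0.u = E0.v ∧ Odd E0.len ∧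
    (∀ E ∈ D, E.IsWalk G) ∧ earsOk G rest E0.verts

/-- A family of initially odd ear decompositions of the connected components of the
weighted graph `Γ_a`: each member is an initially odd ear decomposition, every vertex `i`
appears exactly `a i` times (not as an endpoint of subsequent ears), and different members
lie in different connected components of the base graph. -/
def IsInitOddFamily [DecidableEq V] (G : SimpleGraph V) (a : V → ℕ)
    (L : List (List (PreEar V))) : Prop :=
  (∀ D ∈ L, IsInitOddDecomp G D) ∧
  (∀ i : V, a i = (L.map (earCount i)).sum) ∧
  L.Pairwise (fun D1 D2 =>
    ∀ x y : V, (∃ E ∈ D1, x ∈ E.verts) → (∃ E ∈ D2, y ∈ E.verts) →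
      ¬ (baseGraph G a).Reachable x y)

/-- `φ*(Γ_a)`: the minimal total number of even ears in families of initially odd
ear decompositions of the connected components. -/
noncomputable def phiStar [DecidableEq V] (G : SimpleGraph V) (a : V → ℕ) : ℕ :=
  sInf {k : ℕ | ∃ L, IsInitOddFamily G a L ∧ (L.map evenEars).sum = k}

/-- `μ*(Γ) = (φ*(Γ) + n - c) / 2`, where `n` is the number of vertices and `c` the
number of connected components. -/
noncomputable def muStar [DecidableEq V] (G : SimpleGraph V) : ℕ :=
  (phiStar G (fun _ => 1) + Nat.card V - Nat.card G.ConnectedComponent) / 2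

/-- Every connected component of `G` contains an odd cycle (equivalently, an odd
closed walk), i.e. every connected component is non-bipartite. -/
def StronglyNonBip (G : SimpleGraph V) : Prop :=
  ∀ v : V, ∃ u, G.Reachable v u ∧ ∃ p : G.Walk u u, Odd p.length

/-- `G` is non-bipartite: it contains an odd closed walk. -/
def NonBip (G : SimpleGraph V) : Prop :=
  ∃ (u : V) (p : G.Walk u u), Odd p.length

/-- A vertex cover of `G`. -/
def IsCover (G : SimpleGraph V) (F : Set V) : Prop :=
  ∀ ⦃i j : V⦄, G.Adj i j → i ∈ F ∨ j ∈ F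

/-- The closed neighborhood `N[U]`. -/
def closedNbhd (G : SimpleGraph V) (U : Set V) : Set V :=
  {v | v ∈ U ∨ ∃ u ∈ U, G.Adj v u}

/-- The core `c(F) = F \ N[V \ F]` of a cover `F`. -/
def core (G : SimpleGraph V) (F : Set V) : Set V :=
  {i ∈ F | ∀ j, G.Adj i j → j ∈ F}

/-- `U` is a dominating set of `G`: `N[U] = V`. -/
def IsDominating (G : SimpleGraph V) (U : Set V) : Prop :=
  ∀ v : V, v ∈ U ∨ ∃ u ∈ U, G.Adj v u

/-- The edge ideal of a graph `G` in the polynomial ring over `k`. -/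
noncomputable def edgeIdeal (k : Type*) [Field k] (G : SimpleGraph V) :
    Ideal (MvPolynomial V k) :=
  Ideal.span {p | ∃ i j : V, G.Adj i j ∧ p = X i * X j}

/-- The maximal homogeneous ideal `(x_1, ..., x_n)`. -/
noncomputable def maxIdeal (k : Type*) [Field k] (V : Type*) :
    Ideal (MvPolynomial V k) :=
  Ideal.span (Set.range (X : V → MvPolynomial V k))

/-- The monomial `x^a = x_1^{a_1} ⋯ x_n^{a_n}`. -/
noncomputable def monA (k : Type*) [Field k] [Fintype V] (a : V → ℕ) :
    MvPolynomial V k :=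
  ∏ i : V, X i ^ a i

/-- A connected minimal `s`-base: a connected non-bipartite graph with `μ* = s`
containing no proper spanning subgraph which is connected non-bipartite with `μ* = s`. -/
def ConnMinBase [DecidableEq V] (G : SimpleGraph V) (s : ℕ) : Prop :=
  G.Connected ∧ NonBip G ∧ muStar G = s ∧
    ∀ H : SimpleGraph V, H ≤ G → H ≠ G →
      ¬ (H.Connected ∧ NonBip H ∧ muStar H = s)

open Classical in
/-- The restriction of the weight `a` to the connected component of `i`
in the base graph of `Γ_a`. -/
noncomputable def compWeight [DecidableEq V] (G : SimpleGraph V) (a : V → ℕ) (i : V) :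
    V → ℕ :=
  fun j => if (baseGraph G a).Reachable i j then a j else 0

end Defs

section Aux

noncomputable def ev {V : Type*} [DecidableEq V] (e : V × V) : V →₀ ℕ :=
  Finsupp.single e.1 1 + Finsupp.single e.2 1

lemma ev_sum_apply {V : Type*} [DecidableEq V] (M : Multiset (V × V)) (i : V) :
    ((M.map ev).sum) i = (M.map Prod.fst).count i + (M.map Prod.snd).count i := by
  have hs : ∀ (x j : V), (Finsupp.single x (1:ℕ)) j = if j = x then 1 else 0 := fun x j => by
    rw [Finsupp.single_apply]
    by_cases h : x = j
    · simp [h]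
    · rw [if_neg h, if_neg (fun hh => h hh.symm)]
  induction M using Multiset.induction with
  | empty => simp
  | cons e M ih =>
    rw [Multiset.map_cons, Multiset.sum_cons, Finsupp.add_apply, ih,
      Multiset.map_cons, Multiset.map_cons, Multiset.count_cons, Multiset.count_cons]
    simp only [ev, Finsupp.add_apply, hs]
    by_cases h1 : i = e.1 <;> by_cases h2 : i = e.2 <;> simp [h1, h2] <;> omega

lemma card_eq_sum_count {α : Type*} [Fintype α] [DecidableEq α] (s : Multiset α) :
    Multiset.card s = ∑ i : α, s.count i := by
  rw [← Multiset.toFinset_sum_count_eq]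
  apply Finset.sum_subset (Finset.subset_univ _)
  intro i _ hi
  rw [Multiset.count_eq_zero]
  simpa [Multiset.mem_toFinset] using hi

def ESet {V : Type*} [DecidableEq V] (G : SimpleGraph V) (t : ℕ) : Set (V →₀ ℕ) :=
  {d | ∃ M : Multiset (V × V), (∀ e ∈ M, G.Adj e.1 e.2) ∧
    Multiset.card M = t ∧ d = (M.map ev).sum}

lemma edgeIdeal_eq (k : Type*) [Field k] {V : Type*} [DecidableEq V] (G : SimpleGraph V) :
    edgeIdeal k G = Ideal.span ((fun s => monomial s (1:k)) '' ESet G 1) := by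
  unfold edgeIdeal
  congr 1
  ext p
  constructor
  · rintro ⟨i, j, hij, rfl⟩
    refine ⟨ev (i, j), ⟨{(i, j)}, by simpa using hij, by simp, by simp⟩, ?_⟩
    rw [ev, X, X, monomial_mul, one_mul]
  · rintro ⟨d, ⟨M, hM, hc, rfl⟩, rfl⟩
    obtain ⟨e, he⟩ : ∃ e, e ∈ M := Multiset.card_pos_iff_exists_mem.mp (by omega)
    obtain ⟨M', rfl⟩ := Multiset.exists_cons_of_mem he
    have : M' = 0 := by
      rw [Multiset.card_cons] at hc
      exact Multiset.card_eq_zero.mp (by omega)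
    subst this
    refine ⟨e.1, e.2, hM e (Multiset.mem_cons_self _ _), ?_⟩
    rw [X, X, monomial_mul, one_mul]
    simp [ev]

lemma pow_eq (k : Type*) [Field k] {V : Type*} [DecidableEq V] (G : SimpleGraph V) (t : ℕ) :
    (edgeIdeal k G) ^ t = Ideal.span ((fun s => monomial s (1:k)) '' ESet G t) := by
  induction t with
  | zero =>
    have h0 : ESet (V := V) G 0 = {0} := by
      ext d
      constructor
      · rintro ⟨M, hM, hc, rfl⟩
        rw [Multiset.card_eq_zero.mp hc]
        simp
      · rintro rfl
        exact ⟨0, by simp, by simp, by simp⟩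
    rw [pow_zero, h0]
    simp [Ideal.span_singleton_one, Ideal.one_eq_top]
  | succ t ih =>
    rw [pow_succ, ih, edgeIdeal_eq, Ideal.span_mul_span']
    congr 1
    ext p
    constructor
    · rintro ⟨_, ⟨d1, ⟨M1, h1, hc1, rfl⟩, rfl⟩, _, ⟨d2, ⟨M2, h2, hc2, rfl⟩, rfl⟩, rfl⟩
      refine ⟨(((M1 + M2).map ev).sum), ⟨M1 + M2, ?_, by simp [hc1, hc2], rfl⟩, ?_⟩
      · intro e he
        rcases Multiset.mem_add.mp he with h | h
        exacts [h1 e h, h2 e h]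
      · simp only [monomial_mul, one_mul]
        simp
    · rintro ⟨d, ⟨M, hM, hc, rfl⟩, rfl⟩
      obtain ⟨e, he⟩ : ∃ e, e ∈ M := Multiset.card_pos_iff_exists_mem.mp (by omega)
      obtain ⟨M', rfl⟩ := Multiset.exists_cons_of_mem he
      have hc' : Multiset.card M' = t := by
        rw [Multiset.card_cons] at hc; omega
      refine ⟨monomial ((M'.map ev).sum) 1,
        ⟨_, ⟨M', fun e' he' => hM e' (Multiset.mem_cons_of_mem he'), hc', rfl⟩, rfl⟩,
        monomial (ev e) 1,
        ⟨_, ⟨{e}, by simpa using hM e (Multiset.mem_cons_self _ _), by simp, by simp⟩, rfl⟩, ?_⟩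
      simp only [monomial_mul, one_mul]
      rw [Multiset.map_cons, Multiset.sum_cons, add_comm]

lemma monA_eq (k : Type*) [Field k] {V : Type*} [Fintype V] [DecidableEq V] (a : V → ℕ) :
    monA k a = monomial (Finsupp.equivFunOnFinite.symm a) (1:k) := by
  rw [monA, ← prod_X_pow_eq_monomial (s := Finsupp.equivFunOnFinite.symm a)]
  symm
  apply Finset.prod_subset (Finset.subset_univ _)
  intro i _ hi
  have : (Finsupp.equivFunOnFinite.symm a) i = 0 := Finsupp.notMem_support_iff.mp hi
  rw [this, pow_zero]

end Aux

/-- `x^a ∈ I^t` iff `ν(Γ_a) ≥ t`. -/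
theorem stmt_0 {k : Type*} [Field k] {n : ℕ} (G : SimpleGraph (Fin n))
    (a : Fin n → ℕ) (t : ℕ) :
    monA k a ∈ (edgeIdeal k G) ^ t ↔ t ≤ wNu G a := by
    classical
  set A := Finsupp.equivFunOnFinite.symm a with hAdef
  have hAa : ∀ i, A i = a i := fun i => rfl
  set S : Set ℕ := {k0 : ℕ | ∃ M : Multiset (Fin n × Fin n),
    IsWMatching G a M ∧ Multiset.card M = k0} with hS
  have hwnu : wNu G a = sSup S := rfl
  have hbdd : BddAbove S := by
    refine ⟨∑ i, a i, fun s hs => ?_⟩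
    obtain ⟨M, ⟨hadj, hcnt⟩, rfl⟩ := hs
    calc Multiset.card M = Multiset.card (M.map Prod.fst) := (Multiset.card_map _ _).symm
      _ = ∑ i : Fin n, (M.map Prod.fst).count i := card_eq_sum_count _
      _ ≤ ∑ i, a i := Finset.sum_le_sum fun i _ => le_trans (Nat.le_add_right _ _) (hcnt i)
  have hne : S.Nonempty := ⟨0, 0, ⟨by simp, fun i => by simp⟩, by simp⟩
  rw [pow_eq, monA_eq, mem_ideal_span_monomial_image, hwnu]
  have hsupp : (monomial A (1:k)).support = {A} := by
    rw [support_monomial, if_neg one_ne_zero]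
  rw [hsupp]
  constructor
  · intro h
    obtain ⟨d, ⟨M, hadj, hcard, rfl⟩, hle⟩ := h A (Finset.mem_singleton_self A)
    have hmatch : IsWMatching G a M := by
      refine ⟨hadj, fun i => ?_⟩
      have h2 := (Finsupp.le_def.mp hle) i
      rwa [ev_sum_apply, hAa] at h2
    exact le_csSup hbdd ⟨M, hmatch, hcard⟩
  · intro ht xi hxi
    rw [Finset.mem_singleton] at hxi
    subst hxi
    obtain ⟨M, hM, hcard⟩ := Nat.sSup_mem hne hbdd
    have htM : t ≤ Multiset.card M := by rw [hcard]; exact ht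
    obtain ⟨M', hM'le, hM'card⟩ : ∃ M' ≤ M, Multiset.card M' = t := by
      refine ⟨(M.toList.take t : List _), ?_, ?_⟩
      · conv_rhs => rw [← Multiset.coe_toList M]
        exact Multiset.coe_le.mpr (List.take_sublist _ _).subperm
      · rw [Multiset.coe_card, List.length_take]
        have := Multiset.length_toList M
        omega
    have hmatch' : IsWMatching G a M' :=
      ⟨fun e he => hM.1 e (Multiset.mem_of_le hM'le he),
       fun i => le_trans (add_le_add (Multiset.count_le_of_le _ (Multiset.map_le_map hM'le))
         (Multiset.count_le_of_le _ (Multiset.map_le_map hM'le))) (hM.2 i)⟩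
    refine ⟨(M'.map ev).sum, ⟨M', hmatch'.1, hM'card, rfl⟩, ?_⟩
    rw [Finsupp.le_def]
    intro i
    rw [ev_sum_apply, hAa]
    exact hmatch'.2 i
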